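/- For all parameters α ∈ [0,1], β ∈ (0,1], ν > α−1, the power series N_{α,β,ν}(z) = ∑_{n=0}^∞ z^n / [n]_{α,β,ν}! converges absolutely for every z ∈ ℂ (i.e., has infinite radius of convergence). -/

import Mathlib

/-- The generalized factorial `[n]_{α,β,ν}!`. -/
noncomputable def genFact (α β ν : ℝ) (n : ℕ) : ℝ :=
  (∏ i ∈ Finset.Icc 1 n, Real.Gamma (β * i + 1) / Real.Gamma (β * i + 1 - α)) *
    (Real.Gamma (β * n + 1 - α + ν) / Real.Gamma (1 - α + ν))

/-- The box function `[n]_{α,β,ν}`, with `[0] = 0`. -/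
noncomputable def box (α β ν : ℝ) : ℕ → ℝ
  | 0 => 0
  | n + 1 =>
      (Real.Gamma (β * (n + 1) + 1) / Real.Gamma (β * (n + 1) + 1 - α)) *
        (Real.Gamma (β * (n + 1) + 1 - α + ν) / Real.Gamma (β * n + 1 - α + ν))

/-- Gautschi-type lower bound coming from log-convexity of `Γ`. -/
lemma gamma_gautschi {β x : ℝ} (hβ0 : 0 < β) (hβ1 : β ≤ 1) (hx : 0 < x) :
    x * Real.Gamma x ≤ Real.Gamma (x + β) * (x + β) ^ (1 - β) := by
  rcases eq_or_lt_of_le hβ1 with h1 | h1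
  · subst h1
    rw [sub_self, Real.rpow_zero, mul_one, ← Real.Gamma_add_one hx.ne']
  · have hxβ : 0 < x + β := by linarith
    have h := Real.Gamma_mul_add_mul_le_rpow_Gamma_mul_rpow_Gamma
      (s := x + β) (t := x + β + 1) (a := β) (b := 1 - β) hxβ (by linarith) hβ0
      (by linarith) (by ring)
    have harg : β * (x + β) + (1 - β) * (x + β + 1) = x + 1 := by ring
    rw [harg, Real.Gamma_add_one hx.ne', Real.Gamma_add_one hxβ.ne'] at h
    have hG : 0 < Real.Gamma (x + β) := Real.Gamma_pos_of_pos hxβ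
    calc x * Real.Gamma x ≤ Real.Gamma (x + β) ^ β * ((x + β) * Real.Gamma (x + β)) ^ (1 - β) := h
      _ = Real.Gamma (x + β) * (x + β) ^ (1 - β) := by
          rw [Real.mul_rpow hxβ.le hG.le, ← mul_assoc,
            mul_comm (Real.Gamma (x + β) ^ β), mul_assoc, ← Real.rpow_add hG, mul_comm]
          norm_num

/-- From Gautschi's bound: `Γ(x+β)/Γ(x) ≥ (x+β)^β / 2` for `β ≤ x`. -/
lemma gamma_ratio_lb {β x : ℝ} (hβ0 : 0 < β) (hβ1 : β ≤ 1) (hx : 0 < x) (hβx : β ≤ x) :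
    (x + β) ^ β / 2 ≤ Real.Gamma (x + β) / Real.Gamma x := by
  have hxβ : 0 < x + β := by linarith
  have hGx : 0 < Real.Gamma x := Real.Gamma_pos_of_pos hx
  have hGxβ : 0 < Real.Gamma (x + β) := Real.Gamma_pos_of_pos hxβ
  have hP : 0 < (x + β) ^ β := Real.rpow_pos_of_pos hxβ β
  rw [div_le_div_iff₀ two_pos hGx]
  have h1 := gamma_gautschi hβ0 hβ1 hx
  have hr : (x + β) ^ (1 - β) = (x + β) / (x + β) ^ β := by
    rw [Real.rpow_sub hxβ, Real.rpow_one]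
  rw [hr] at h1
  -- h1 : x * Γ x ≤ Γ(x+β) * ((x+β) / (x+β)^β)
  have h2 : (x + β) ^ β * Real.Gamma x * (x + β) ≤
      Real.Gamma (x + β) * ((x + β) / (x + β) ^ β) * ((x + β) ^ β * 2) := by
    calc (x + β) ^ β * Real.Gamma x * (x + β)
        ≤ (x + β) ^ β * Real.Gamma x * (2 * x) := by
          apply mul_le_mul_of_nonneg_left (by linarith) (by positivity)
      _ = (x * Real.Gamma x) * ((x + β) ^ β * 2) := by ring
      _ ≤ Real.Gamma (x + β) * ((x + β) / (x + β) ^ β) * ((x + β) ^ β * 2) := by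
          apply mul_le_mul_of_nonneg_right h1; positivity
  have h3 : Real.Gamma (x + β) * ((x + β) / (x + β) ^ β) * ((x + β) ^ β * 2) =
      Real.Gamma (x + β) * 2 * (x + β) := by
    field_simp
  rw [h3] at h2
  exact le_of_mul_le_mul_right h2 hxβ

theorem normalization_series_converges_everywhere (α β ν : ℝ) (hα0 : 0 ≤ α) (hα1 : α ≤ 1)
    (hβ0 : 0 < β) (hβ1 : β ≤ 1) (hν : ν > α - 1) (z : ℂ) :
    Summable (fun n : ℕ => ‖z ^ n / (genFact α β ν n : ℂ)‖) := by
  have hνpos : 0 < 1 - α + ν := by linarith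
  have hxp : ∀ n : ℕ, 0 < β * n + 1 - α + ν := fun n => by
    have : (0:ℝ) ≤ β * n := by positivity
    linarith
  have hpos : ∀ n : ℕ, 0 < genFact α β ν n := by
    intro n
    apply mul_pos
    · apply Finset.prod_pos
      intro i hi
      have hi1 : (1:ℝ) ≤ (i:ℝ) := by exact_mod_cast (Finset.mem_Icc.mp hi).1
      have h1 : 0 < β * i + 1 := by nlinarith
      have h2 : 0 < β * i + 1 - α := by nlinarith
      exact div_pos (Real.Gamma_pos_of_pos h1) (Real.Gamma_pos_of_pos h2)
    · exact div_pos (Real.Gamma_pos_of_pos (hxp n)) (Real.Gamma_pos_of_pos hνpos)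
  -- ratio recursion
  have hsucc : ∀ n : ℕ, genFact α β ν (n + 1) =
      genFact α β ν n *
        ((Real.Gamma (β * ((n:ℝ) + 1) + 1) / Real.Gamma (β * ((n:ℝ) + 1) + 1 - α)) *
          (Real.Gamma (β * ((n:ℝ) + 1) + 1 - α + ν) / Real.Gamma (β * n + 1 - α + ν))) := by
    intro n
    have hG : Real.Gamma (β * n + 1 - α + ν) ≠ 0 := (Real.Gamma_pos_of_pos (hxp n)).ne'
    have hG' : Real.Gamma (1 - α + ν) ≠ 0 := (Real.Gamma_pos_of_pos hνpos).ne'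
    have key : Real.Gamma (β * ((n:ℝ) + 1) + 1 - α + ν) / Real.Gamma (1 - α + ν) =
        Real.Gamma (β * n + 1 - α + ν) / Real.Gamma (1 - α + ν) *
          (Real.Gamma (β * ((n:ℝ) + 1) + 1 - α + ν) / Real.Gamma (β * n + 1 - α + ν)) := by
      field_simp
    unfold genFact
    rw [Finset.prod_Icc_succ_top (by omega)]
    push_cast
    rw [key]
    ring
  -- eventual conditions
  have htn : Filter.Tendsto (fun n : ℕ => β * n) Filter.atTop Filter.atTop :=
    (tendsto_natCast_atTop_atTop (R := ℝ)).const_mul_atTop hβ0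
  have htend : Filter.Tendsto (fun n : ℕ => β * n + 1 - α + ν) Filter.atTop Filter.atTop := by
    have he : (fun n : ℕ => β * n + 1 - α + ν) = fun n : ℕ => β * n + (1 - α + ν) := by
      ext n; ring
    rw [he]
    exact Filter.tendsto_atTop_add_const_right _ _ htn
  have htend2 : Filter.Tendsto (fun n : ℕ => (β * n + 1 - α + ν) ^ β)
      Filter.atTop Filter.atTop := (tendsto_rpow_atTop hβ0).comp htend
  apply summable_of_ratio_norm_eventually_le (r := 1/2) (by norm_num)
  filter_upwards [htn.eventually_ge_atTop (1 + α),
    htend2.eventually_ge_atTop (4 * (‖z‖ + 1))] with n hn1 hn2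
  set x := β * n + 1 - α + ν with hxdef
  have hx0 : 0 < x := hxp n
  have hβx : β ≤ x := by rw [hxdef]; nlinarith [htn, (by positivity : (0:ℝ) ≤ β * n)]
  have hxβ : 0 < x + β := by linarith
  -- first factor ≥ 1
  set w := β * ((n:ℝ) + 1) + 1 with hwdef
  have hw2 : 2 ≤ w - α := by rw [hwdef]; nlinarith
  have hA1 : 1 ≤ Real.Gamma w / Real.Gamma (w - α) := by
    rw [le_div_iff₀ (Real.Gamma_pos_of_pos (by linarith : (0:ℝ) < w - α)), one_mul]
    rcases eq_or_lt_of_le hα0 with h | h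
    · rw [← h, sub_zero]
    · exact (Real.Gamma_strictMonoOn_Ici (Set.mem_Ici.mpr hw2)
        (Set.mem_Ici.mpr (by linarith)) (by linarith)).le
  -- second factor ≥ 2 * (‖z‖ + 1)
  have hargB : β * ((n:ℝ) + 1) + 1 - α + ν = x + β := by rw [hxdef]; ring
  have hBlb : 2 * (‖z‖ + 1) ≤ Real.Gamma (x + β) / Real.Gamma x := by
    refine le_trans ?_ (gamma_ratio_lb hβ0 hβ1 hx0 hβx)
    have : x ^ β ≤ (x + β) ^ β := Real.rpow_le_rpow hx0.le (by linarith) hβ0.le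
    have h2 : 4 * (‖z‖ + 1) ≤ x ^ β := hn2
    linarith
  -- put everything together
  have hGw : 0 < Real.Gamma w / Real.Gamma (w - α) :=
    div_pos (Real.Gamma_pos_of_pos (by linarith : (0:ℝ) < w))
      (Real.Gamma_pos_of_pos (by linarith : (0:ℝ) < w - α))
  have hGB : 0 < Real.Gamma (x + β) / Real.Gamma x :=
    div_pos (Real.Gamma_pos_of_pos hxβ) (Real.Gamma_pos_of_pos hx0)
  have hbox : 2 * (‖z‖ + 1) ≤
      (Real.Gamma w / Real.Gamma (w - α)) * (Real.Gamma (x + β) / Real.Gamma x) := by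
    calc 2 * (‖z‖ + 1) ≤ Real.Gamma (x + β) / Real.Gamma x := hBlb
      _ = 1 * (Real.Gamma (x + β) / Real.Gamma x) := (one_mul _).symm
      _ ≤ _ := mul_le_mul_of_nonneg_right hA1 hGB.le
  -- norms
  have hnorm : ∀ m : ℕ, ‖z ^ m / (genFact α β ν m : ℂ)‖ = ‖z‖ ^ m / genFact α β ν m := by
    intro m
    rw [norm_div, norm_pow, Complex.norm_real, Real.norm_eq_abs, abs_of_pos (hpos m)]
  rw [Real.norm_eq_abs, Real.norm_eq_abs, abs_of_nonneg (norm_nonneg _),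
    abs_of_nonneg (norm_nonneg _), hnorm, hnorm, hsucc n]
  have hratio : β * ((n:ℝ) + 1) + 1 - α = w - α := by rw [hwdef]
  rw [hargB, hratio, ← hwdef, ← hxdef]
  set D := (Real.Gamma w / Real.Gamma (w - α)) * (Real.Gamma (x + β) / Real.Gamma x) with hD
  have hbox' : 2 * (‖z‖ + 1) ≤ D := hbox
  have hDpos : 0 < D := mul_pos hGw hGB
  have hG : 0 < genFact α β ν n := hpos n
  have heq : ‖z‖ ^ (n + 1) / (genFact α β ν n * D) =
      ‖z‖ ^ n / genFact α β ν n * (‖z‖ / D) := by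
    rw [pow_succ]; field_simp
  rw [heq]
  have hhalf : ‖z‖ / D ≤ 1 / 2 := by
    rw [div_le_iff₀ hDpos]; linarith
  calc ‖z‖ ^ n / genFact α β ν n * (‖z‖ / D)
      ≤ ‖z‖ ^ n / genFact α β ν n * (1 / 2) :=
        mul_le_mul_of_nonneg_left hhalf (by positivity)
    _ = 1 / 2 * (‖z‖ ^ n / genFact α β ν n) := by ring
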